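/- If nodes u and v are automorphically equivalent in a finite simple graph (so there is a bijection σ : N(u) → N(v)) and the current similarity function R^k satisfies R^k(x, σ(x)) = 1 for all x ∈ N(u), with all values of R^k in [0,1], then the updated value R^{k+1}(u,v) = (1−β)·w(𝓜)/max(N_u,N_v) + β equals 1, where w(𝓜) is the maximum weight matching between N(u) and N(v) under weights R^k. -/

import Mathlib

def IsMatching {α β : Type*} (A : Finset α) (B : Finset β) (M : Finset (α × β)) : Prop :=
  (∀ p ∈ M, p.1 ∈ A ∧ p.2 ∈ B) ∧
  (∀ p ∈ M, ∀ q ∈ M, p.1 = q.1 → p = q) ∧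
  (∀ p ∈ M, ∀ q ∈ M, p.2 = q.2 → p = q)

def matchWeight {α β : Type*} (r : α → β → ℝ) (M : Finset (α × β)) : ℝ :=
  ∑ p ∈ M, r p.1 p.2

theorem stmt_10 {α : Type*} (A B : Finset α) (hA : A.Nonempty)
    (σ : α → α) (hσ : Set.BijOn σ ↑A ↑B)
    (β : ℝ) (hβ : 0 < β) (hβ1 : β < 1)
    (Rk : α → α → ℝ)
    (hRk : ∀ x y, 0 ≤ Rk x y ∧ Rk x y ≤ 1)
    (hone : ∀ x ∈ A, Rk x (σ x) = 1)
    (wM : ℝ)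
    (hwM : IsGreatest {w | ∃ M, IsMatching A B M ∧ w = matchWeight Rk M} wM) :
    (1 - β) * wM / (max A.card B.card : ℕ) + β = 1 := by
  classical
  have hcard : B.card = A.card := by
    refine (Finset.card_bij (fun x _ => σ x) ?_ ?_ ?_).symm
    · intro a ha; exact hσ.mapsTo ha
    · intro a ha b hb h; exact hσ.injOn ha hb h
    · intro b hb
      obtain ⟨a, ha, rfl⟩ := hσ.surjOn hb
      exact ⟨a, ha, rfl⟩
  -- the diagonal matching
  set M₀ : Finset (α × α) := A.image (fun x => (x, σ x)) with hM₀
  have hinj : ∀ x ∈ A, ∀ y ∈ A, (x, σ x) = (y, σ y) → x = y := by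
    intro x _ y _ h; exact (Prod.mk.injEq _ _ _ _ ▸ h).1
  have hmem : ∀ p ∈ M₀, ∃ x ∈ A, (x, σ x) = p := by
    intro p hp; simpa [hM₀] using hp
  have hM₀match : IsMatching A B M₀ := by
    refine ⟨?_, ?_, ?_⟩
    · intro p hp
      obtain ⟨x, hx, rfl⟩ := hmem p hp
      exact ⟨hx, hσ.mapsTo hx⟩
    · intro p hp q hq h
      obtain ⟨x, hx, rfl⟩ := hmem p hp
      obtain ⟨y, hy, rfl⟩ := hmem q hq
      simp only at h; simp [h]
    · intro p hp q hq h
      obtain ⟨x, hx, rfl⟩ := hmem p hp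
      obtain ⟨y, hy, rfl⟩ := hmem q hq
      simp only at h
      simp [hσ.injOn hx hy h]
  have hw₀ : matchWeight Rk M₀ = A.card := by
    rw [matchWeight, hM₀, Finset.sum_image hinj]
    rw [Finset.sum_congr rfl (fun x hx => hone x hx)]
    simp
  have hle : (A.card : ℝ) ≤ wM := hw₀ ▸ hwM.2 ⟨M₀, hM₀match, rfl⟩
  have hge : wM ≤ A.card := by
    obtain ⟨M, hM, rfl⟩ := hwM.1
    calc matchWeight Rk M ≤ ∑ _p ∈ M, (1 : ℝ) :=
          Finset.sum_le_sum (fun p _ => (hRk p.1 p.2).2)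
      _ = M.card := by simp
      _ ≤ A.card := by
          have : M.card = (M.image Prod.fst).card := by
            rw [Finset.card_image_of_injOn]
            intro p hp q hq h
            exact hM.2.1 p hp q hq h
          rw [this]
          exact_mod_cast Nat.cast_le.mpr (Finset.card_le_card (by
            intro a ha
            obtain ⟨p, hp, rfl⟩ := Finset.mem_image.mp ha
            exact (hM.1 p hp).1))
      _ = (A.card : ℝ) := rfl
  have hwA : wM = A.card := le_antisymm hge hle
  have hpos : (0:ℕ) < A.card := Finset.card_pos.mpr hA
  rw [hwA, hcard, max_self]
  field_simp
  ring
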